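/- Routing strictly improves output when prices differ: for two fee-less constant product AMMs with y₁/x₁ > y₂/x₂ and any trade size δ_x > δ̄ = √(x₁·x₂·y₁/y₂) − x₁, the optimal routed output (first route δ̄ to AMM 1, then split the remainder proportionally to the synchronized liquidities) strictly exceeds the output of sending all δ_x to AMM 1 alone. -/

import Mathlib

/-- Routing strictly improves output when prices differ: for trade sizes beyond
the synchronization threshold δ̄, routing δ̄ to AMM 1 and splitting the remainder
proportionally strictly beats sending everything to AMM 1. -/
theorem cpamm_routing_beats_single_amm
    (x₁ y₁ x₂ y₂ δx : ℝ) (hx₁ : 0 < x₁) (hy₁ : 0 < y₁) (hx₂ : 0 < x₂) (hy₂ : 0 < y₂)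
    (hprice : y₁ / x₁ > y₂ / x₂)
    (hδx : δx > Real.sqrt (x₁ * x₂ * y₁ / y₂) - x₁) :
    let δbar := Real.sqrt (x₁ * x₂ * y₁ / y₂) - x₁
    let x₁' := x₁ + δbar
    let y₁' := x₁ * y₁ / (x₁ + δbar)
    let r := δx - δbar
    let k := x₁' / (x₁' + x₂)
    (y₁ - y₁') + y₁' * (k * r) / (x₁' + k * r) +
      y₂ * ((1 - k) * r) / (x₂ + (1 - k) * r) >
    y₁ * δx / (x₁ + δx) := by
  intro δbar x₁' y₁' r k
  set s := Real.sqrt (x₁ * x₂ * y₁ / y₂) with hsdef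
  have hs0 : 0 < x₁ * x₂ * y₁ / y₂ := by positivity
  have hs : 0 < s := Real.sqrt_pos.mpr hs0
  have hss : s * s = x₁ * x₂ * y₁ / y₂ := Real.mul_self_sqrt hs0.le
  have hsy : s * s * y₂ = x₁ * x₂ * y₁ := by
    rw [hss]; field_simp
  have hx₁' : x₁' = s := by simp only [x₁', δbar]; ring
  have hr : 0 < r := by simp only [r, δbar]; linarith
  have hsx : 0 < s + x₂ := by linarith
  have hsxr : 0 < s + x₂ + r := by linarith
  have hsr : 0 < s + r := by linarith
  have hδ : δx = s - x₁ + r := by simp only [r, δbar]; ring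
  have hy₁' : y₁' = x₁ * y₁ / s := by
    show x₁ * y₁ / (x₁ + δbar) = _
    have hd : x₁ + δbar = s := by simp only [δbar]; ring
    rw [hd]
  have hk : k = s / (s + x₂) := by show x₁' / (x₁' + x₂) = _; rw [hx₁']
  have h2 : y₁' * (k * r) / (x₁' + k * r) = (x₁ * y₁ / s) * r / (s + x₂ + r) := by
    rw [hy₁', hk, hx₁']
    rw [div_eq_div_iff (by positivity) (by positivity)]
    field_simp
  have h3 : y₂ * ((1 - k) * r) / (x₂ + (1 - k) * r) = y₂ * r / (s + x₂ + r) := by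
    rw [hk]
    have h1k : 1 - s / (s + x₂) = x₂ / (s + x₂) := by field_simp; ring
    rw [h1k]
    rw [div_eq_div_iff (by positivity) (by positivity)]
    field_simp
  rw [h2, h3, hy₁', hδ]
  rw [show x₁ + (s - x₁ + r) = s + r by ring]
  have key : (y₁ - x₁ * y₁ / s + x₁ * y₁ / s * r / (s + x₂ + r) + y₂ * r / (s + x₂ + r)) -
      y₁ * (s - x₁ + r) / (s + r)
      = (y₂ * r * r) / ((s + x₂ + r) * (s + r)) := by
    have hy1 : y₁ = s * s * y₂ / (x₁ * x₂) := by
      field_simp at hsy ⊢; linarith [hsy]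
    rw [hy1]
    field_simp
    ring
  have hpos : 0 < (y₂ * r * r) / ((s + x₂ + r) * (s + r)) := by positivity
  linarith [key, hpos]
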